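/- For all nonnegative integers m and n, B_{1+2m}(n) := Σ_{k=1}^{n} (−1)^(k−1) · C(2n, n−k) · k^(1+2m) satisfies B_{1+2m}(n) = Σ_{ℓ=0}^{m} (−1)^ℓ · ⟨2n⟩_{2ℓ} · C(2n−2ℓ−2, n−ℓ−1) · σ_{m,ℓ}(n), where binomial coefficients C(a, b) with a < 0, b < 0, or b > a are taken to be 0. -/
import Mathlib

open Finset

/-- Falling factorial `⟨x⟩_n = x(x-1)⋯(x-n+1)`. -/
noncomputable def ffact (x : ℝ) : ℕ → ℝ
  | 0 => 1
  | n + 1 => ffact x n * (x - n)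

/-- `σ_{m,ℓ}(y)`: the complete homogeneous symmetric polynomial of degree `m - ℓ`
evaluated at `(y-0)^2, (y-1)^2, …, (y-ℓ)^2`, i.e. the sum over weakly increasing
sequences `0 ≤ k_1 ≤ ⋯ ≤ k_{m-ℓ} ≤ ℓ` of `∏ i, (y - k_i)^2`. -/
noncomputable def csigma (m ℓ : ℕ) (y : ℝ) : ℝ :=
  ∑ k ∈ Finset.univ.filter (fun k : Fin (m - ℓ) → Fin (ℓ + 1) => Monotone k),
    ∏ i, (y - (k i : ℝ)) ^ 2

open Finset

noncomputable def S (d ℓ : ℕ) (y : ℝ) : ℝ :=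
  ∑ k ∈ Finset.univ.filter (fun k : Fin d → Fin (ℓ + 1) => Monotone k),
    ∏ i, (y - (k i : ℝ)) ^ 2

lemma S_zero_d (ℓ : ℕ) (y : ℝ) : S 0 ℓ y = 1 := by
  rw [S, Finset.filter_true_of_mem (fun k _ => show Monotone k from fun a => a.elim0)]
  rw [Finset.sum_congr rfl (fun k _ => Finset.prod_of_isEmpty _)]
  simp

lemma S_zero_l (d : ℕ) (y : ℝ) : S d 0 y = y ^ (2 * d) := by
  have h : ∀ k : Fin d → Fin (0+1), Monotone k :=
    fun k => show Monotone k from fun a b _ => le_of_eq (Fin.ext (by omega))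
  rw [S, Finset.filter_true_of_mem (fun k _ => h k)]
  rw [Finset.sum_eq_single (fun _ => 0)]
  · simp [pow_mul]
  · intro b _ hb
    exact absurd (funext fun i => Fin.ext (by omega : (b i).1 = (0 : Fin (0+1)).1)) hb
  · simp
lemma S_split (d ℓ : ℕ) (y : ℝ) :
    S (d+1) (ℓ+1) y = S (d+1) ℓ y + (y - (ℓ+1)) ^ 2 * S d (ℓ+1) y := by
  rw [show S (d+1) (ℓ+1) y = ∑ k ∈ Finset.univ.filter
      (fun k : Fin (d+1) → Fin (ℓ+2) => Monotone k), ∏ i, (y - (k i : ℝ)) ^ 2 from rfl]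
  rw [← Finset.sum_filter_add_sum_filter_not _
      (fun k : Fin (d+1) → Fin (ℓ+2) => k (Fin.last d) = Fin.last (ℓ+1))]
  have h1 : ∑ k ∈ (Finset.univ.filter (fun k : Fin (d+1) → Fin (ℓ+2) => Monotone k)).filter
      (fun k => k (Fin.last d) = Fin.last (ℓ+1)), ∏ i, (y - (k i : ℝ)) ^ 2
      = (y - (ℓ+1)) ^ 2 * S d (ℓ+1) y := by
    rw [S, Finset.mul_sum]
    refine Finset.sum_nbij' (fun a => Fin.init a) (fun g => Fin.snoc g (Fin.last (ℓ+1)))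
      ?_ ?_ ?_ ?_ ?_
    · intro a ha
      simp only [Finset.mem_filter, Finset.mem_univ, true_and] at ha ⊢
      exact fun s t hst => ha.1 (Fin.castSucc_le_castSucc_iff.2 hst)
    · intro g hg
      simp only [Finset.mem_filter, Finset.mem_univ, true_and] at hg ⊢
      constructor
      · intro s t hst
        rcases Fin.eq_castSucc_or_eq_last t with ⟨t', rfl⟩ | rfl
        · rcases Fin.eq_castSucc_or_eq_last s with ⟨s', rfl⟩ | rfl
          · rw [Fin.snoc_castSucc, Fin.snoc_castSucc]
            exact hg (Fin.castSucc_le_castSucc_iff.1 hst)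
          · exact absurd (lt_of_le_of_lt hst (Fin.castSucc_lt_last t')) (lt_irrefl _)
        · rw [Fin.snoc_last]; exact Fin.le_last _
      · exact Fin.snoc_last _ _
    · intro a ha
      simp only [Finset.mem_filter, Finset.mem_univ, true_and] at ha
      rw [← ha.2]; exact Fin.snoc_init_self a
    · intro g hg; exact Fin.init_snoc _ _
    · intro a ha
      simp only [Finset.mem_filter, Finset.mem_univ, true_and] at ha
      rw [Fin.prod_univ_castSucc (fun i => (y - ((a i : Fin (ℓ+2)) : ℝ)) ^ 2)]
      rw [ha.2, mul_comm]
      congr 1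
      simp [Fin.last]
  have h2 : ∑ k ∈ (Finset.univ.filter (fun k : Fin (d+1) → Fin (ℓ+2) => Monotone k)).filter
      (fun k => ¬ k (Fin.last d) = Fin.last (ℓ+1)), ∏ i, (y - (k i : ℝ)) ^ 2
      = S (d+1) ℓ y := by
    rw [S]
    refine Finset.sum_nbij' (fun a t => (⟨min (a t).1 ℓ, by omega⟩ : Fin (ℓ+1)))
      (fun b t => (b t).castSucc) ?_ ?_ ?_ ?_ ?_
    · intro a ha
      simp only [Finset.mem_filter, Finset.mem_univ, true_and] at ha ⊢
      intro s t hst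
      have := ha.1 hst
      simp only [Fin.le_def] at this ⊢
      omega
    · intro b hb
      simp only [Finset.mem_filter, Finset.mem_univ, true_and] at hb ⊢
      constructor
      · intro s t hst
        exact Fin.castSucc_le_castSucc_iff.2 (hb hst)
      · intro hcon
        have := congrArg Fin.val hcon
        simp only [Fin.coe_castSucc, Fin.val_last] at this
        have := (b (Fin.last d)).isLt
        omega
    · intro a ha
      simp only [Finset.mem_filter, Finset.mem_univ, true_and] at ha
      have key : ∀ t, (a t).1 ≤ ℓ := by
        intro t
        have h1 := ha.1 (Fin.le_last t)
        have h2 : (a (Fin.last d)).1 ≠ ℓ + 1 := fun hc => ha.2 (Fin.ext hc)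
        have := (a (Fin.last d)).isLt
        simp only [Fin.le_def] at h1
        omega
      funext t
      exact Fin.ext (by simp [key t])
    · intro b hb
      funext t
      exact Fin.ext (by have := (b t).isLt; simp; omega)
    · intro a ha
      simp only [Finset.mem_filter, Finset.mem_univ, true_and] at ha
      have key : ∀ t, (a t).1 ≤ ℓ := by
        intro t
        have h1 := ha.1 (Fin.le_last t)
        have h2 : (a (Fin.last d)).1 ≠ ℓ + 1 := fun hc => ha.2 (Fin.ext hc)
        have := (a (Fin.last d)).isLt
        simp only [Fin.le_def] at h1
        omega
      refine Finset.prod_congr rfl fun t _ => ?_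
      congr 2
      simp [key t, min_eq_left (key t)]
  rw [h1, h2]
  ring
lemma S_rec (d : ℕ) : ∀ (ℓ : ℕ) (y : ℝ),
    S (d+1) (ℓ+1) y = y^2 * S d (ℓ+1) y + S (d+1) ℓ (y-1) := by
  induction d with
  | zero =>
    intro ℓ
    induction ℓ with
    | zero =>
      intro y
      rw [S_split 0 0 y]
      simp only [S_zero_d, S_zero_l]
      push_cast; ring
    | succ ℓ ih =>
      intro y
      rw [S_split 0 (ℓ+1) y, S_split 0 ℓ (y-1), ih y]
      simp only [S_zero_d]
      push_cast; ring
  | succ d ihd =>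
    intro ℓ
    induction ℓ with
    | zero =>
      intro y
      have key : S (d+1) 0 y + (y-1)^2 * S d 1 y = y^2 * S d 1 y + S (d+1) 0 (y-1) := by
        have h1 := S_split d 0 y
        have h2 := ihd 0 y
        simp only [show (0:ℕ)+1 = 1 from rfl] at h1 h2
        push_cast at h1
        linear_combination h2 - h1
      have e1 := S_split (d+1) 0 y
      have e2 := ihd 0 y
      have e3 : S (d+2) 0 y = y^2 * S (d+1) 0 y := by
        rw [S_zero_l, S_zero_l, show 2*(d+2) = 2*(d+1)+2 by ring, pow_add]; ring
      have e4 : S (d+2) 0 (y-1) = (y-1)^2 * S (d+1) 0 (y-1) := by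
        rw [S_zero_l, S_zero_l, show 2*(d+2) = 2*(d+1)+2 by ring, pow_add]; ring
      simp only [show (0:ℕ)+1 = 1 from rfl, show d+1+1 = d+2 from rfl] at e1 e2 ⊢
      push_cast at e1
      linear_combination e1 + e3 - e4 + ((y-1)^2 - y^2) * e2 + y^2 * key
    | succ ℓ ihℓ =>
      intro y
      have e1 := S_split (d+1) (ℓ+1) y
      have e2 := ihℓ y
      have e3 := S_split (d+1) ℓ (y-1)
      have e4 := S_split d (ℓ+1) y
      have e5 := ihd (ℓ+1) y
      simp only [show d+1+1 = d+2 from rfl, show ℓ+1+1 = ℓ+2 from rfl] at e1 e2 e3 e4 e5 ⊢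
      push_cast at e1 e2 e3 e4 e5 ⊢
      linear_combination e1 + e2 - e3 - y^2 * e4 + (y - ℓ - 2)^2 * e5
lemma alt1 (M : ℕ) : ∀ r : ℕ, ∑ j ∈ range (r+1), (-1:ℝ)^j * ((M+1).choose j) = (-1)^r * (M.choose r) := by
  intro r
  induction r with
  | zero => simp
  | succ r ih =>
    rw [Finset.sum_range_succ, ih, Nat.choose_succ_succ (M) (r)]
    push_cast
    ring

lemma alt2 (M r : ℕ) :
    ∑ j ∈ range (r+2), (-1:ℝ)^j * j * ((M+2).choose j) = ((M:ℝ)+2) * (-1)^(r+1) * (M.choose r) := by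
  rw [Finset.sum_range_succ']
  have h : ∀ i, (-1:ℝ)^(i+1) * ((i+1 : ℕ) : ℝ) * ((M+2).choose (i+1))
      = -((M:ℝ)+2) * ((-1)^i * ((M+1).choose i)) := by
    intro i
    have := Nat.add_one_mul_choose_eq (M+1) i
    have hc : ((M:ℝ)+2) * ((M+1).choose i) = ((M+2).choose (i+1)) * ((i:ℝ)+1) := by
      exact_mod_cast congrArg (Nat.cast : ℕ → ℝ) this
    push_cast
    linear_combination (-1:ℝ)^i * hc
  rw [Finset.sum_congr rfl (fun i _ => h i), ← Finset.mul_sum, alt1 M r]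
  push_cast
  ring

lemma choose_core (M j : ℕ) (h : j ≤ M) :
    (j+1) * ((M+1) - j) * ((M+2).choose (j+1)) = (M+2) * (M+1) * (M.choose j) := by
  have h1 : (M+2) * ((M+1).choose j) = ((M+2).choose (j+1)) * (j+1) := Nat.add_one_mul_choose_eq (M+1) j
  have h2 : ((M+1).choose (j+1)) * (j+1) = ((M+1).choose j) * ((M+1) - j) := Nat.choose_succ_right_eq (M+1) j
  have h3 : (M+1) * (M.choose j) = ((M+1).choose (j+1)) * (j+1) := Nat.add_one_mul_choose_eq M j
  calc (j+1) * ((M+1) - j) * ((M+2).choose (j+1)) = ((M+2).choose (j+1)) * (j+1) * ((M+1)-j) := by ring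
  _ = (M+2) * (((M+1).choose j) * ((M+1) - j)) := by rw [← h1]; ring
  _ = (M+2) * (((M+1).choose (j+1)) * (j+1)) := by rw [h2]
  _ = (M+2) * ((M+1) * (M.choose j)) := by rw [← h3]
  _ = (M+2) * (M+1) * (M.choose j) := by ring

lemma B1 (n : ℕ) (hn : 1 ≤ n) :
    ∑ k ∈ Finset.Icc 1 n, (-1:ℝ)^(k-1) * (((2*n).choose (n-k)):ℝ) * k
      = (((2*n-2).choose (n-1)) : ℝ) := by
  obtain ⟨p, rfl⟩ : ∃ p, n = p + 1 := ⟨n - 1, by omega⟩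
  rcases Nat.eq_zero_or_pos p with rfl | hp
  · norm_num
  obtain ⟨q, rfl⟩ : ∃ q, p = q + 1 := ⟨p - 1, by omega⟩
  set P := q + 2 with hP
  -- reindex: Icc 1 P → range P via k = j+1, then reflect
  have step1 : ∑ k ∈ Finset.Icc 1 P, (-1:ℝ)^(k-1) * (((2*P).choose (P-k)):ℝ) * k
      = ∑ j ∈ range P, (-1:ℝ)^j * (((2*P).choose j):ℝ) * ((P:ℝ) - j) * (-1:ℝ)^(P-1) := by
    rw [← Finset.Ico_add_one_right_eq_Icc, Finset.sum_Ico_eq_sum_range]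
    simp only [Nat.succ_sub_one, Nat.add_sub_cancel]
    rw [← Finset.sum_range_reflect]
    refine Finset.sum_congr rfl fun j hj => ?_
    rw [Finset.mem_range] at hj
    have e1 : 1 + (P - 1 - j) - 1 = P - 1 - j := by omega
    have e2 : P - (1 + (P - 1 - j)) = j := by omega
    have e3 : ((1 + (P - 1 - j) : ℕ) : ℝ) = (P:ℝ) - (j:ℝ) := by
      have h' : 1 + (P - 1 - j) = P - j := by omega
      rw [h', Nat.cast_sub (by omega : j ≤ P)]
    have e4 : (-1:ℝ)^(P-1-j) = (-1:ℝ)^(P-1) * (-1:ℝ)^j := by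
      have : P - 1 + j = (P - 1 - j) + 2*j := by omega
      have h5 : (-1:ℝ)^(P-1+j) = (-1:ℝ)^(P-1-j) := by
        rw [this, pow_add, pow_mul]; norm_num
      rw [← h5, pow_add]
    rw [e1, e2, e3, e4]
    have e5 : P - 1 = q + 1 := by omega
    rw [e5]
    ring
  rw [step1]
  have hsum : ∑ j ∈ range P, (-1:ℝ)^j * (((2*P).choose j):ℝ) * ((P:ℝ) - j) * (-1:ℝ)^(P-1)
      = ((-1:ℝ)^(P-1) * (P:ℝ)) * (∑ j ∈ range P, (-1:ℝ)^j * (((2*P).choose j):ℝ))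
        - (-1:ℝ)^(P-1) * (∑ j ∈ range P, (-1:ℝ)^j * (j:ℝ) * (((2*P).choose j):ℝ)) := by
    rw [Finset.mul_sum, Finset.mul_sum, ← Finset.sum_sub_distrib]
    exact Finset.sum_congr rfl fun j _ => by ring
  rw [hsum]
  have hA : ∑ j ∈ range P, (-1:ℝ)^j * (((2*P).choose j):ℝ) = (-1:ℝ)^(P-1) * (((2*P-1).choose (P-1)):ℝ) := by
    have := alt1 (2*P-1) (P-1)
    have h1 : 2*P - 1 + 1 = 2*P := by omega
    have h2 : P - 1 + 1 = P := by omega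
    rw [h1, h2] at this
    exact this
  have hB : ∑ j ∈ range P, (-1:ℝ)^j * (j:ℝ) * (((2*P).choose j):ℝ)
      = ((2*P:ℕ):ℝ) * (-1:ℝ)^(P-1) * (((2*P-2).choose (P-2)):ℝ) := by
    have := alt2 (2*P-2) (P-2)
    have h1 : 2*P - 2 + 2 = 2*P := by omega
    have h2 : P - 2 + 2 = P := by omega
    have h3 : P - 2 + 1 = P - 1 := by omega
    rw [h1, h2, h3] at this
    rw [this]
    have : ((2*P-2:ℕ):ℝ) + 2 = ((2*P:ℕ):ℝ) := by
      push_cast [Nat.cast_sub (by omega : 2 ≤ 2*P)]; ring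
    rw [this]
  rw [hA, hB]
  -- now pure identities
  have hsq : ((-1:ℝ)^(P-1))^2 = 1 := by
    rw [← pow_mul, mul_comm, pow_mul]; norm_num
  have pascal : ((2*P-1).choose (P-1)) = ((2*P-2).choose (P-2)) + ((2*P-2).choose (P-1)) := by
    have := Nat.choose_succ_succ (2*P-2) (P-2)
    simp only [Nat.succ_eq_add_one] at this
    have h1 : 2*P - 2 + 1 = 2*P - 1 := by omega
    have h2 : P - 2 + 1 = P - 1 := by omega
    rw [h1, h2] at this
    exact this
  have hid : P * ((2*P-2).choose (P-2)) = (P-1) * ((2*P-2).choose (P-1)) := by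
    have := Nat.choose_succ_right_eq (2*P-2) (P-2)
    have h2 : P - 2 + 1 = P - 1 := by omega
    have h3 : 2*P - 2 - (P - 2) = P := by omega
    rw [h2, h3] at this
    rw [Nat.mul_comm, ← this, Nat.mul_comm]
  have pascal' : (((2*P-1).choose (P-1)):ℝ) = (((2*P-2).choose (P-2)):ℝ) + (((2*P-2).choose (P-1)):ℝ) := by
    exact_mod_cast congrArg (Nat.cast : ℕ → ℝ) pascal
  have hid' : (P:ℝ) * (((2*P-2).choose (P-2)):ℝ) = ((P:ℝ)-1) * (((2*P-2).choose (P-1)):ℝ) := by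
    have h := congrArg (Nat.cast : ℕ → ℝ) hid
    rw [Nat.cast_mul, Nat.cast_mul, Nat.cast_sub (by omega : 1 ≤ P), Nat.cast_one] at h
    exact h
  have h2P : ((2*P:ℕ):ℝ) = 2 * (P:ℝ) := by push_cast; ring
  rw [h2P]
  linear_combination ((P:ℝ) * (((2*P-1).choose (P-1)):ℝ) - 2*(P:ℝ)*(((2*P-2).choose (P-2)):ℝ)) * hsq + (P:ℝ) * pascal' - hid'


lemma csigma_eq (m ℓ : ℕ) (y : ℝ) : csigma m ℓ y = S (m - ℓ) ℓ y := rfl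

lemma csigma_self (m : ℕ) (y : ℝ) : csigma m m y = 1 := by
  rw [csigma_eq, Nat.sub_self, S_zero_d]

lemma ffact_front (x : ℝ) : ∀ k, ffact x (k+1) = x * ffact (x-1) k := by
  intro k
  induction k with
  | zero => simp [ffact]
  | succ k ih =>
    show ffact x (k+1) * (x - ((k+1 : ℕ):ℝ)) = x * ffact (x-1) (k+1)
    rw [ih, show ffact (x-1) (k+1) = ffact (x-1) k * ((x-1) - (k:ℝ)) from rfl]
    push_cast
    ring

lemma csigma_succ (m ℓ : ℕ) (h : ℓ ≤ m) (y : ℝ) :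
    csigma (m+1) ℓ y = y^2 * csigma m ℓ y + (if ℓ = 0 then 0 else csigma m (ℓ-1) (y-1)) := by
  rcases Nat.eq_zero_or_pos ℓ with rfl | hl
  · rw [if_pos rfl, csigma_eq, csigma_eq]
    simp only [Nat.sub_zero]
    rw [S_zero_l, S_zero_l, show 2*(m+1) = 2*m+2 by ring, pow_add]
    ring
  · obtain ⟨ℓ', rfl⟩ : ∃ ℓ', ℓ = ℓ'+1 := ⟨ℓ-1, by omega⟩
    rw [if_neg (by omega), csigma_eq, csigma_eq, csigma_eq]
    simp only [Nat.add_sub_cancel]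
    have e1 : m + 1 - (ℓ'+1) = (m - (ℓ'+1)) + 1 := by omega
    have e2 : m - ℓ' = (m - (ℓ'+1)) + 1 := by omega
    rw [e1, e2]
    exact S_rec (m - (ℓ'+1)) ℓ' y

noncomputable def If' (n ℓ : ℕ) : ℝ :=
  if ℓ + 1 ≤ n then (((2*n - 2*ℓ - 2).choose (n - ℓ - 1)) : ℝ) else 0

noncomputable def Lf (m n : ℕ) : ℝ :=
  ∑ k ∈ Finset.Icc 1 n, (-1 : ℝ)^(k-1) * (((2*n).choose (n-k)):ℝ) * (k:ℝ)^(1+2*m)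

noncomputable def Rf (m n : ℕ) : ℝ :=
  ∑ ℓ ∈ Finset.range (m+1), (-1:ℝ)^ℓ * ffact (2*(n:ℝ)) (2*ℓ) * If' n ℓ * csigma m ℓ (n:ℝ)

lemma L_rec (m n : ℕ) :
    Lf (m+1) (n+1) = ((n:ℝ)+1)^2 * Lf m (n+1)
      - ((2*(n:ℝ)+2)*(2*(n:ℝ)+1)) * Lf m n := by
  unfold Lf
  rw [Finset.sum_Icc_succ_top (by omega : 1 ≤ n+1)]
  rw [Finset.sum_Icc_succ_top (by omega : 1 ≤ n+1)]
  have key : ∀ k ∈ Finset.Icc 1 n,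
      (-1:ℝ)^(k-1) * (((2*(n+1)).choose (n+1-k)):ℝ) * (k:ℝ)^(1+2*(m+1))
      = ((n:ℝ)+1)^2 * ((-1:ℝ)^(k-1) * (((2*(n+1)).choose (n+1-k)):ℝ) * (k:ℝ)^(1+2*m))
        - ((2*(n:ℝ)+2)*(2*(n:ℝ)+1)) * ((-1:ℝ)^(k-1) * (((2*n).choose (n-k)):ℝ) * (k:ℝ)^(1+2*m)) := by
    intro k hk
    rw [Finset.mem_Icc] at hk
    have hc := choose_core (2*n) (n-k) (by omega)
    have a1 : n - k + 1 = n + 1 - k := by omega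
    have a2 : 2*n + 1 - (n - k) = n + 1 + k := by omega
    have a3 : 2*n + 2 = 2*(n+1) := by omega
    rw [a1, a2, a3] at hc
    have hcR := congrArg (Nat.cast : ℕ → ℝ) hc
    push_cast at hcR
    rw [Nat.cast_sub (by omega : k ≤ n + 1)] at hcR
    push_cast at hcR
    have hp : (k:ℝ)^(1+2*(m+1)) = (k:ℝ)^(1+2*m) * (k:ℝ)^2 := by
      have e : 1+2*(m+1) = (1+2*m)+2 := by omega
      rw [e, pow_add]
    rw [hp]
    linear_combination (-((-1:ℝ)^(k-1) * (k:ℝ)^(1+2*m))) * hcR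
  rw [Finset.sum_congr rfl key, Finset.sum_sub_distrib, ← Finset.mul_sum, ← Finset.mul_sum]
  have hsub : n + 1 - (n + 1) = 0 := by omega
  rw [hsub]
  have hp2 : ((n+1:ℕ):ℝ)^(1+2*(m+1)) = ((n+1:ℕ):ℝ)^(1+2*m) * ((n+1:ℕ):ℝ)^2 := by
    have e : 1+2*(m+1) = (1+2*m)+2 := by omega
    rw [e, pow_add]
  rw [hp2]
  push_cast
  ring

lemma coef_shift (n ℓ : ℕ) :
    (-1:ℝ)^(ℓ+1) * ffact (2*((n+1:ℕ):ℝ)) (2*(ℓ+1)) * If' (n+1) (ℓ+1)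
      = -((2*(n:ℝ)+2)*(2*(n:ℝ)+1)) * ((-1:ℝ)^ℓ * ffact (2*(n:ℝ)) (2*ℓ) * If' n ℓ) := by
  have f2 : ffact (2*((n+1:ℕ):ℝ)) (2*(ℓ+1))
      = (2*(n:ℝ)+2) * ((2*(n:ℝ)+1) * ffact (2*(n:ℝ)) (2*ℓ)) := by
    rw [show 2*(ℓ+1) = (2*ℓ+1)+1 by ring, ffact_front, ffact_front]
    have e1 : (2*((n+1:ℕ):ℝ)) = 2*(n:ℝ)+2 := by push_cast; ring
    have e2 : (2*((n+1:ℕ):ℝ)) - 1 = 2*(n:ℝ)+1 := by push_cast; ring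
    have e3 : (2*((n+1:ℕ):ℝ)) - 1 - 1 = 2*(n:ℝ) := by push_cast; ring
    rw [e3]
    push_cast
    ring
  have fI : If' (n+1) (ℓ+1) = If' n ℓ := by
    unfold If'
    have c1 : 2*(n+1) - 2*(ℓ+1) - 2 = 2*n - 2*ℓ - 2 := by omega
    have c2 : (n+1) - (ℓ+1) - 1 = n - ℓ - 1 := by omega
    rw [c1, c2]
    exact if_congr (by omega) rfl rfl
  rw [f2, fI]
  ring

lemma R_rec (m n : ℕ) :
    Rf (m+1) (n+1) = ((n:ℝ)+1)^2 * Rf m (n+1)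
      - ((2*(n:ℝ)+2)*(2*(n:ℝ)+1)) * Rf m n := by
  unfold Rf
  rw [Finset.sum_range_succ]
  have key : ∀ ℓ ∈ Finset.range (m+1),
      (-1:ℝ)^ℓ * ffact (2*((n+1:ℕ):ℝ)) (2*ℓ) * If' (n+1) ℓ * csigma (m+1) ℓ ((n+1:ℕ):ℝ)
      = (((n:ℝ)+1)^2 * ((-1:ℝ)^ℓ * ffact (2*((n+1:ℕ):ℝ)) (2*ℓ) * If' (n+1) ℓ * csigma m ℓ ((n+1:ℕ):ℝ)))
        + ((-1:ℝ)^ℓ * ffact (2*((n+1:ℕ):ℝ)) (2*ℓ) * If' (n+1) ℓ *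
            (if ℓ = 0 then 0 else csigma m (ℓ-1) (((n+1:ℕ):ℝ) - 1))) := by
    intro ℓ hℓ
    rw [Finset.mem_range] at hℓ
    rw [csigma_succ m ℓ (by omega) (((n+1:ℕ):ℝ))]
    have : (((n+1:ℕ):ℝ))^2 = ((n:ℝ)+1)^2 := by push_cast; ring
    rw [this]
    ring
  rw [Finset.sum_congr rfl key, Finset.sum_add_distrib, ← Finset.mul_sum]
  have hmid : ∑ ℓ ∈ Finset.range (m+1), ((-1:ℝ)^ℓ * ffact (2*((n+1:ℕ):ℝ)) (2*ℓ) * If' (n+1) ℓ *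
      (if ℓ = 0 then 0 else csigma m (ℓ-1) (((n+1:ℕ):ℝ) - 1)))
      = ∑ ℓ ∈ Finset.range m, ((-1:ℝ)^(ℓ+1) * ffact (2*((n+1:ℕ):ℝ)) (2*(ℓ+1)) * If' (n+1) (ℓ+1) *
          csigma m ℓ (((n+1:ℕ):ℝ) - 1)) := by
    rw [Finset.sum_range_succ']
    simp [Nat.add_sub_cancel]
  rw [hmid]
  have hc1 : (((n+1:ℕ):ℝ)) - 1 = (n:ℝ) := by push_cast; ring
  rw [hc1]
  have key2 : ∀ ℓ ∈ Finset.range m,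
      (-1:ℝ)^(ℓ+1) * ffact (2*((n+1:ℕ):ℝ)) (2*(ℓ+1)) * If' (n+1) (ℓ+1) * csigma m ℓ (n:ℝ)
      = -((2*(n:ℝ)+2)*(2*(n:ℝ)+1)) * ((-1:ℝ)^ℓ * ffact (2*(n:ℝ)) (2*ℓ) * If' n ℓ * csigma m ℓ (n:ℝ)) := by
    intro ℓ _
    have := coef_shift n ℓ
    linear_combination csigma m ℓ (n:ℝ) * this
  rw [Finset.sum_congr rfl key2]
  have last1 : csigma (m+1) (m+1) (((n+1:ℕ):ℝ)) = 1 := csigma_self _ _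
  have last2 : (-1:ℝ)^(m+1) * ffact (2*((n+1:ℕ):ℝ)) (2*(m+1)) * If' (n+1) (m+1)
      = -((2*(n:ℝ)+2)*(2*(n:ℝ)+1)) * ((-1:ℝ)^m * ffact (2*(n:ℝ)) (2*m) * If' n m * csigma m m (n:ℝ)) := by
    rw [csigma_self]
    have := coef_shift n m
    linear_combination this
  rw [last1, mul_one, last2]
  -- now: Rf m n appears split as range m sum + final term
  rw [Finset.sum_range_succ (fun ℓ => (-1:ℝ)^ℓ * ffact (2*(n:ℝ)) (2*ℓ) * If' n ℓ * csigma m ℓ (n:ℝ)) m,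
      ← Finset.mul_sum]
  ring

theorem B_odd_moment (m n : ℕ) :
    ∑ k ∈ Finset.Icc 1 n,
        (-1 : ℝ) ^ (k - 1) * (((2 * n).choose (n - k) : ℝ)) * (k : ℝ) ^ (1 + 2 * m) =
      ∑ ℓ ∈ Finset.range (m + 1),
        (-1 : ℝ) ^ ℓ * ffact (2 * (n : ℝ)) (2 * ℓ) *
          (if ℓ + 1 ≤ n then ((2 * n - 2 * ℓ - 2).choose (n - ℓ - 1) : ℝ) else 0) *
          csigma m ℓ (n : ℝ) := by
  have main : ∀ m n : ℕ, Lf m n = Rf m n := by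
    intro m
    induction m with
    | zero =>
      intro n
      cases n with
      | zero => simp [Lf, Rf, If']
      | succ p =>
        unfold Lf Rf
        rw [Finset.sum_range_one]
        rw [csigma_self, If']
        rw [if_pos (by omega : 0 + 1 ≤ p + 1)]
        have harg1 : 2*(p+1) - 2*0 - 2 = 2*(p+1) - 2 := by omega
        have harg2 : (p+1) - 0 - 1 = (p+1) - 1 := by omega
        rw [harg1, harg2]
        have hL : ∀ k, ((k:ℕ):ℝ)^(1+2*0) = (k:ℝ) := by intro k; norm_num
        calc ∑ k ∈ Finset.Icc 1 (p+1), (-1:ℝ)^(k-1) * (((2*(p+1)).choose ((p+1)-k)):ℝ) * (k:ℝ)^(1+2*0)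
            = ∑ k ∈ Finset.Icc 1 (p+1), (-1:ℝ)^(k-1) * (((2*(p+1)).choose ((p+1)-k)):ℝ) * (k:ℝ) := by
              exact Finset.sum_congr rfl fun k _ => by rw [hL]
          _ = (((2*(p+1)-2).choose ((p+1)-1)):ℝ) := B1 (p+1) (by omega)
          _ = (-1:ℝ)^0 * ffact (2*((p+1:ℕ):ℝ)) (2*0) * (((2*(p+1)-2).choose ((p+1)-1)):ℝ) * 1 := by
              show _ = 1 * ffact _ 0 * _ * 1
              show _ = 1 * 1 * _ * 1
              ring
    | succ m ih =>
      intro n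
      cases n with
      | zero =>
        unfold Lf Rf
        simp [If']
      | succ p =>
        rw [L_rec m p, ih (p+1), ih p, ← R_rec m p]
  exact main m n
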